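/- arXiv:2110.07781 — 2 statements merged into one kernel-verified Lean document; each statement's English description precedes it below -/
import Mathlib

section
/- There exists a constant C > 0 such that for every positive integer n, the n-th generic stabilizer rank satisfies χ_n ≤ C·2^{n/2}. -/
open scoped BigOperators Classical

noncomputable section

namespace StabPaper

/-- The space `𝔽₂ⁿ` of length-`n` bitstrings. -/
abbrev F2 (n : ℕ) := Fin n → ZMod 2

/-- `A ⊆ 𝔽₂ⁿ` is a (nonempty) affine linear subspace. -/
def IsAffineSubspace {n : ℕ} (A : Set (F2 n)) : Prop :=
  A.Nonempty ∧ ∀ x ∈ A, ∀ y ∈ A, ∀ z ∈ A, x + y + z ∈ A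

/-- `l : 𝔽₂ⁿ → 𝔽₂` is a linear form. -/
def IsLinearForm {n : ℕ} (l : F2 n → ZMod 2) : Prop :=
  ∀ x y, l (x + y) = l x + l y

/-- `q : 𝔽₂ⁿ → 𝔽₂` is a quadratic form (polynomial of degree at most 2
with vanishing constant term). -/
def IsQuadraticForm {n : ℕ} (q : F2 n → ZMod 2) : Prop :=
  q 0 = 0 ∧ ∀ x y z, q (x + y + z) = q (x + y) + q (x + z) + q (y + z) + q x + q y + q z

/-- A stabilizer state vector on `n` qubits. -/
def IsStabilizerState {n : ℕ} (σ : F2 n → ℂ) : Prop :=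
  ∃ (A : Set (F2 n)) (l q : F2 n → ZMod 2),
    IsAffineSubspace A ∧ IsLinearForm l ∧ IsQuadraticForm q ∧
    ∀ x, σ x = if x ∈ A then Complex.I ^ (l x).val * (-1 : ℂ) ^ (q x).val else 0

/-- A real stabilizer state vector on `n` qubits (the case `l = 0`). -/
def IsRealStabilizerState {n : ℕ} (σ : F2 n → ℂ) : Prop :=
  ∃ (A : Set (F2 n)) (q : F2 n → ZMod 2),
    IsAffineSubspace A ∧ IsQuadraticForm q ∧
    ∀ x, σ x = if x ∈ A then (-1 : ℂ) ^ (q x).val else 0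

/-- The stabilizer rank: the least `r` such that `ψ` is a `ℂ`-linear combination of
`r` stabilizer state vectors. -/
def stabRank {n : ℕ} (ψ : F2 n → ℂ) : ℕ :=
  sInf {r : ℕ | ∃ (c : Fin r → ℂ) (σ : Fin r → (F2 n → ℂ)),
    (∀ i, IsStabilizerState (σ i)) ∧ ψ = ∑ i, c i • σ i}

/-- The real stabilizer rank: the least `r` such that `ψ` is a `ℂ`-linear combination of
`r` real stabilizer state vectors. -/
def realStabRank {n : ℕ} (ψ : F2 n → ℂ) : ℕ :=
  sInf {r : ℕ | ∃ (c : Fin r → ℂ) (σ : Fin r → (F2 n → ℂ)),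
    (∀ i, IsRealStabilizerState (σ i)) ∧ ψ = ∑ i, c i • σ i}

/-- The `n`-fold tensor power of a one-qubit vector `ψ : ℂ²`. -/
def tensorPow (ψ : ZMod 2 → ℂ) (n : ℕ) : F2 n → ℂ := fun x => ∏ i, ψ (x i)

/-- The Euclidean norm on `ℂ^{𝔽₂ⁿ}`. -/
def l2norm {n : ℕ} (φ : F2 n → ℂ) : ℝ := Real.sqrt (∑ x, ‖φ x‖ ^ 2)

/-- The δ-approximate stabilizer rank. -/
def approxStabRank {n : ℕ} (δ : ℝ) (ψ : F2 n → ℂ) : ℕ :=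
  sInf {r : ℕ | ∃ φ : F2 n → ℂ, φ ≠ 0 ∧
    l2norm (fun x => ((l2norm φ : ℝ) : ℂ)⁻¹ * φ x - ((l2norm ψ : ℝ) : ℂ)⁻¹ * ψ x) < δ ∧
    stabRank φ = r}

/-- The one-qubit vector `a·e₀ + b·e₁ ∈ ℂ²`. -/
def qubit (a b : ℂ) : ZMod 2 → ℂ := fun x => if x = 0 then a else b

/-- A nonzero `ψ ∈ ℂ²` is a one-qubit stabilizer state vector iff it is proportional to
one of `e₀, e₁, e₀+e₁, e₀−e₁, e₀+i·e₁, e₀−i·e₁`. -/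
def IsQubitStabVec (ψ : ZMod 2 → ℂ) : Prop :=
  ∃ c : ℂ, c ≠ 0 ∧ (ψ = c • qubit 1 0 ∨ ψ = c • qubit 0 1 ∨ ψ = c • qubit 1 1 ∨
    ψ = c • qubit 1 (-1) ∨ ψ = c • qubit 1 Complex.I ∨ ψ = c • qubit 1 (-Complex.I))

/-- The `n`-th generic stabilizer rank `χ_n`. -/
def genStabRank (n : ℕ) : ℕ :=
  sSup {r : ℕ | ∃ ψ : ZMod 2 → ℂ, ψ ≠ 0 ∧ stabRank (tensorPow ψ n) = r}

/-- The `n`-th generic real stabilizer rank `χ_nℝ`. -/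
def genRealStabRank (n : ℕ) : ℕ :=
  sSup {r : ℕ | ∃ ψ : ZMod 2 → ℂ, ψ ≠ 0 ∧ realStabRank (tensorPow ψ n) = r}



section Aux

set_option maxRecDepth 8000
set_option maxHeartbeats 1000000

lemma zmod2_cases (u : ZMod 2) : u = 0 ∨ u = 1 := by revert u; decide

lemma zmod2_add_self (u : ZMod 2) : u + u = 0 := by revert u; decide

-- ===== glue =====
def glue {p q : ℕ} (f : F2 p → ℂ) (g : F2 q → ℂ) : F2 (p+q) → ℂ :=
  fun x => f (fun i => x (Fin.castAdd q i)) * g (fun j => x (Fin.natAdd p j))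

lemma linearForm_zero {n : ℕ} {l : F2 n → ZMod 2} (hl : IsLinearForm l) : l 0 = 0 := by
  have h := hl 0 0
  rw [add_zero] at h
  have : l 0 + l 0 = l 0 + 0 := by rw [← h, add_zero]
  exact (add_left_cancel this)

lemma prod_ident : ∀ u1 u2 u3 v1 v2 v3 : ZMod 2,
    (u1+u2+u3)*(v1+v2+v3) =
      (u1+u2)*(v1+v2)+(u1+u3)*(v1+v3)+(u2+u3)*(v2+v3)+u1*v1+u2*v2+u3*v3 := by decide

lemma phase_mul (u v s t : ZMod 2) :
    (Complex.I ^ u.val * (-1:ℂ) ^ s.val) * (Complex.I ^ v.val * (-1:ℂ) ^ t.val)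
      = Complex.I ^ ((u+v).val) * (-1:ℂ) ^ ((s+t+u*v).val) := by
  have h11 : ((1:ZMod 2)+1) = 0 := by decide
  have v0 : (0 : ZMod 2).val = 0 := rfl
  have v1 : (1 : ZMod 2).val = 1 := rfl
  rcases zmod2_cases u with hu|hu <;> rcases zmod2_cases v with hv|hv <;>
    rcases zmod2_cases s with hs|hs <;> rcases zmod2_cases t with ht|ht <;>
      subst hu <;> subst hv <;> subst hs <;> subst ht <;>
      simp [h11, v0, v1, Complex.I_mul_I]

lemma isStabilizerState_glue {p q : ℕ} {σ : F2 p → ℂ} {τ : F2 q → ℂ}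
    (hσ : IsStabilizerState σ) (hτ : IsStabilizerState τ) : IsStabilizerState (glue σ τ) := by
  obtain ⟨A1, l1, q1, hA1, hl1, hq1, hv1⟩ := hσ
  obtain ⟨A2, l2, q2, hA2, hl2, hq2, hv2⟩ := hτ
  set L : F2 (p+q) → F2 p := fun x i => x (Fin.castAdd q i) with hL
  set R : F2 (p+q) → F2 q := fun x j => x (Fin.natAdd p j) with hR
  have hLadd : ∀ x y : F2 (p+q), L (x+y) = L x + L y := fun x y => rfl
  have hRadd : ∀ x y : F2 (p+q), R (x+y) = R x + R y := fun x y => rfl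
  refine ⟨{x | L x ∈ A1 ∧ R x ∈ A2},
    fun x => l1 (L x) + l2 (R x),
    fun x => q1 (L x) + q2 (R x) + l1 (L x) * l2 (R x), ⟨?_, ?_⟩, ?_, ⟨?_, ?_⟩, ?_⟩
  · -- nonempty
    obtain ⟨a1, ha1⟩ := hA1.1
    obtain ⟨a2, ha2⟩ := hA2.1
    refine ⟨Fin.addCases (motive := fun _ => ZMod 2) a1 a2, ?_, ?_⟩
    · have : L (Fin.addCases (motive := fun _ => ZMod 2) a1 a2) = a1 :=
        funext fun i => Fin.addCases_left i
      rw [this]; exact ha1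
    · have : R (Fin.addCases (motive := fun _ => ZMod 2) a1 a2) = a2 :=
        funext fun j => Fin.addCases_right j
      rw [this]; exact ha2
  · -- closed
    intro x hx y hy z hz
    exact ⟨hA1.2 _ hx.1 _ hy.1 _ hz.1, hA2.2 _ hx.2 _ hy.2 _ hz.2⟩
  · -- linear
    intro x y
    dsimp only
    rw [hLadd, hRadd, hl1, hl2]; ring
  · -- quad zero
    have hz1 : L 0 = 0 := rfl
    have hz2 : R 0 = 0 := rfl
    dsimp only
    rw [hz1, hz2, hq1.1, hq2.1, linearForm_zero hl1]; ring
  · -- quad identity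
    intro x y z
    have e1 : L (x+y+z) = L x + L y + L z := rfl
    have e2 : R (x+y+z) = R x + R y + R z := rfl
    dsimp only
    rw [e1, e2, hq1.2 (L x) (L y) (L z), hq2.2 (R x) (R y) (R z)]
    rw [hLadd, hRadd, hLadd, hRadd, hLadd, hRadd]
    have hlin1 : l1 (L x + L y + L z) = l1 (L x) + l1 (L y) + l1 (L z) := by
      rw [hl1, hl1]
    have hlin2 : l2 (R x + R y + R z) = l2 (R x) + l2 (R y) + l2 (R z) := by
      rw [hl2, hl2]
    rw [hlin1, hlin2, hl1, hl1, hl1, hl2, hl2, hl2]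
    have hp := prod_ident (l1 (L x)) (l1 (L y)) (l1 (L z)) (l2 (R x)) (l2 (R y)) (l2 (R z))
    linear_combination hp
  · -- values
    intro x
    show σ (L x) * τ (R x) = _
    rw [hv1 (L x), hv2 (R x)]
    simp only [Set.mem_setOf_eq]
    by_cases h1 : L x ∈ A1 <;> by_cases h2 : R x ∈ A2 <;>
      simp only [h1, h2, if_true, if_false, and_true, and_false, true_and, false_and,
        not_false_iff, mul_zero, zero_mul, if_neg, ite_true, ite_false]
    exact phase_mul _ _ _ _



lemma isStabilizerState_point {n : ℕ} (x₀ : F2 n) :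
    IsStabilizerState (fun x => if x = x₀ then (1:ℂ) else 0) := by
  refine ⟨{x₀}, 0, 0, ⟨⟨x₀, rfl⟩, ?_⟩, fun x y => by simp, ⟨rfl, fun x y z => by simp⟩, ?_⟩
  · intro x hx y hy z hz
    simp only [Set.mem_singleton_iff] at hx hy hz ⊢
    rw [hx, hy, hz, show x₀ + x₀ = 0 from funext fun _ => zmod2_add_self _, zero_add]
  · intro x
    simp only [Set.mem_singleton_iff, Pi.zero_apply]
    norm_num

lemma stabRank_le {n r : ℕ} {ψ : F2 n → ℂ} (c : Fin r → ℂ) (σ : Fin r → (F2 n → ℂ))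
    (hσ : ∀ i, IsStabilizerState (σ i)) (h : ψ = ∑ i, c i • σ i) : stabRank ψ ≤ r :=
  Nat.sInf_le ⟨c, σ, hσ, h⟩

lemma exists_decomp_card {n : ℕ} (ψ : F2 n → ℂ) :
    ∃ (c : Fin (2^n) → ℂ) (σ : Fin (2^n) → (F2 n → ℂ)),
      (∀ i, IsStabilizerState (σ i)) ∧ ψ = ∑ i, c i • σ i := by
  have hcard : Fintype.card (F2 n) = 2 ^ n := by simp [Fintype.card_fun]
  let e : Fin (2^n) ≃ F2 n := (Fintype.equivFinOfCardEq hcard).symm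
  refine ⟨fun k => ψ (e k), fun k => fun x => if x = e k then 1 else 0,
    fun k => isStabilizerState_point (e k), ?_⟩
  have := Equiv.sum_comp e (fun y => ψ y • (fun x => if x = y then (1:ℂ) else 0))
  rw [this]
  funext x
  rw [Finset.sum_apply]
  rw [Finset.sum_eq_single x]
  · simp
  · intro y _ hy; simp [Ne.symm hy]
  · intro h; exact absurd (Finset.mem_univ x) h

lemma stabRank_le_two_pow {n : ℕ} (ψ : F2 n → ℂ) : stabRank ψ ≤ 2 ^ n := by
  obtain ⟨c, σ, hσ, h⟩ := exists_decomp_card ψ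
  exact stabRank_le c σ hσ h

lemma stabRank_mem {n : ℕ} (ψ : F2 n → ℂ) :
    ∃ (c : Fin (stabRank ψ) → ℂ) (σ : Fin (stabRank ψ) → (F2 n → ℂ)),
      (∀ i, IsStabilizerState (σ i)) ∧ ψ = ∑ i, c i • σ i := by
  have hne : {r : ℕ | ∃ (c : Fin r → ℂ) (σ : Fin r → (F2 n → ℂ)),
      (∀ i, IsStabilizerState (σ i)) ∧ ψ = ∑ i, c i • σ i}.Nonempty :=
    ⟨2^n, exists_decomp_card ψ⟩
  exact Nat.sInf_mem hne

/-- rank of a glued product is at most the product of ranks -/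
lemma stabRank_glue_le {p q : ℕ} (f : F2 p → ℂ) (g : F2 q → ℂ) :
    stabRank (glue f g) ≤ stabRank f * stabRank g := by
  obtain ⟨c, σ, hσ, hf⟩ := stabRank_mem f
  obtain ⟨d, τ, hτ, hg⟩ := stabRank_mem g
  let e : Fin (stabRank f) × Fin (stabRank g) ≃ Fin (stabRank f * stabRank g) := finProdFinEquiv
  refine stabRank_le (fun k => c (e.symm k).1 * d (e.symm k).2)
    (fun k => glue (σ (e.symm k).1) (τ (e.symm k).2))
    (fun k => isStabilizerState_glue (hσ _) (hτ _)) ?_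
  funext x
  rw [Finset.sum_apply]
  rw [← Equiv.sum_comp e (fun k =>
    ((fun k => c (e.symm k).1 * d (e.symm k).2) k • (fun k => glue (σ (e.symm k).1) (τ (e.symm k).2)) k) x)]
  simp only [Equiv.symm_apply_apply, Pi.smul_apply, smul_eq_mul]
  rw [Fintype.sum_prod_type]
  have h12 : glue f g x = f (fun i => x (Fin.castAdd q i)) * g (fun j => x (Fin.natAdd p j)) := rfl
  have hfx := congrFun hf (fun i => x (Fin.castAdd q i))
  have hgx := congrFun hg (fun j => x (Fin.natAdd p j))
  rw [Finset.sum_apply] at hfx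
  rw [Finset.sum_apply] at hgx
  rw [h12, hfx, hgx, Finset.sum_mul_sum]
  apply Finset.sum_congr rfl
  intro i _
  apply Finset.sum_congr rfl
  intro j _
  have h34 : glue (σ i) (τ j) x
      = σ i (fun i => x (Fin.castAdd q i)) * τ j (fun j => x (Fin.natAdd p j)) := rfl
  simp only [Pi.smul_apply, smul_eq_mul, h34]
  ring

lemma tensorPow_add (ψ : ZMod 2 → ℂ) (p q : ℕ) :
    tensorPow ψ (p+q) = glue (tensorPow ψ p) (tensorPow ψ q) := by
  funext x
  exact Fin.prod_univ_add (fun i => ψ (x i))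

lemma stabRank_tensorPow_add (ψ : ZMod 2 → ℂ) (p q : ℕ) :
    stabRank (tensorPow ψ (p+q)) ≤ stabRank (tensorPow ψ p) * stabRank (tensorPow ψ q) := by
  rw [tensorPow_add]
  exact stabRank_glue_le _ _


def E1 : F2 6 → ZMod 2 := fun x => x 0 + x 1 + x 2 + x 3 + x 4 + x 5
def E2 : F2 6 → ZMod 2 := fun x => x 0 * x 1 + x 0 * x 2 + x 0 * x 3 + x 0 * x 4 + x 0 * x 5 + x 1 * x 2 + x 1 * x 3 + x 1 * x 4 + x 1 * x 5 + x 2 * x 3 + x 2 * x 4 + x 2 * x 5 + x 3 * x 4 + x 3 * x 5 + x 4 * x 5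
def QA : F2 6 → ZMod 2 := fun x => x 0 * x 1 + x 0 * x 2 + x 1 * x 2
def QB : F2 6 → ZMod 2 := fun x => x 0 * x 3 + x 0 * x 4 + x 1 * x 3 + x 1 * x 4 + x 2 * x 3 + x 2 * x 4 + x 3 * x 4

lemma h2zmod : (2 : ZMod 2) = 0 := by decide

lemma isLin_E1 : IsLinearForm E1 := by
  intro x y
  simp only [E1, Pi.add_apply]
  ring

lemma isQuad_E1 : IsQuadraticForm E1 := by
  constructor
  · simp [E1]
  · intro x y z
    simp only [E1, Pi.add_apply]
    linear_combination (-(x 0 + x 1 + x 2 + x 3 + x 4 + x 5 + y 0 + y 1 + y 2 + y 3 + y 4 + y 5 + z 0 + z 1 + z 2 + z 3 + z 4 + z 5)) * h2zmod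

lemma isQuad_E2 : IsQuadraticForm E2 := by
  constructor
  · simp [E2]
  · intro x y z
    simp only [E2, Pi.add_apply]
    linear_combination (-(x 0 * x 1 + x 0 * x 2 + x 0 * x 3 + x 0 * x 4 + x 0 * x 5 + x 1 * x 2 + x 1 * x 3 + x 1 * x 4 + x 1 * x 5 + x 2 * x 3 + x 2 * x 4 + x 2 * x 5 + x 3 * x 4 + x 3 * x 5 + x 4 * x 5 + y 0 * y 1 + y 0 * y 2 + y 0 * y 3 + y 0 * y 4 + y 0 * y 5 + y 1 * y 2 + y 1 * y 3 + y 1 * y 4 + y 1 * y 5 + y 2 * y 3 + y 2 * y 4 + y 2 * y 5 + y 3 * y 4 + y 3 * y 5 + y 4 * y 5 + z 0 * z 1 + z 0 * z 2 + z 0 * z 3 + z 0 * z 4 + z 0 * z 5 + z 1 * z 2 + z 1 * z 3 + z 1 * z 4 + z 1 * z 5 + z 2 * z 3 + z 2 * z 4 + z 2 * z 5 + z 3 * z 4 + z 3 * z 5 + z 4 * z 5)) * h2zmod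

lemma isQuad_QA : IsQuadraticForm QA := by
  constructor
  · simp [QA]
  · intro x y z
    simp only [QA, Pi.add_apply]
    linear_combination (-(x 0 * x 1 + x 0 * x 2 + x 1 * x 2 + y 0 * y 1 + y 0 * y 2 + y 1 * y 2 + z 0 * z 1 + z 0 * z 2 + z 1 * z 2)) * h2zmod

lemma isQuad_QB : IsQuadraticForm QB := by
  constructor
  · simp [QB]
  · intro x y z
    simp only [QB, Pi.add_apply]
    linear_combination (-(x 0 * x 3 + x 0 * x 4 + x 1 * x 3 + x 1 * x 4 + x 2 * x 3 + x 2 * x 4 + x 3 * x 4 + y 0 * y 3 + y 0 * y 4 + y 1 * y 3 + y 1 * y 4 + y 2 * y 3 + y 2 * y 4 + y 3 * y 4 + z 0 * z 3 + z 0 * z 4 + z 1 * z 3 + z 1 * z 4 + z 2 * z 3 + z 2 * z 4 + z 3 * z 4)) * h2zmod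

lemma isQuad_zero {n : ℕ} : IsQuadraticForm (fun (_ : F2 n) => (0 : ZMod 2)) := by
  constructor
  · rfl
  · intro x y z; simp

lemma isLin_zero {n : ℕ} : IsLinearForm (fun (_ : F2 n) => (0 : ZMod 2)) := by
  intro x y; simp

def wt {n : ℕ} (x : F2 n) : ℕ := ∑ i, (x i).val

lemma factE1 : ∀ x : F2 6, E1 x = (wt x : ZMod 2) := by decide
lemma factE2 : ∀ x : F2 6, E2 x = ((wt x).choose 2 : ZMod 2) := by decide
lemma factwt6 : ∀ x : F2 6, wt x ≤ 6 := by decide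
lemma factwt0 : ∀ x : F2 6, wt x = 0 ↔ x = 0 := by decide
lemma factwt66 : ∀ x : F2 6, wt x = 6 ↔ x = (fun _ => 1) := by decide
lemma factQ1 : ∀ x : F2 6, wt x = 1 → QA x = 0 ∧ QB x = 0 := by decide
lemma factQ3 : ∀ x : F2 6, wt x = 3 → QA x + QB x = 1 := by decide
lemma factQ5 : ∀ x : F2 6, wt x = 5 → QA x = 1 ∧ QB x = 1 := by decide

lemma tensorPow_qubit_apply (a b : ℂ) {n : ℕ} (x : F2 n) :
    tensorPow (qubit a b) n x = a ^ (n - wt x) * b ^ (wt x) := by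
  have hfac : ∀ i, qubit a b (x i) = a ^ (1 - (x i).val) * b ^ ((x i).val) := by
    intro i
    have hv1 : (1 : ZMod 2).val = 1 := rfl
    have hne : (1 : ZMod 2) ≠ 0 := by decide
    rcases zmod2_cases (x i) with h | h <;> rw [h] <;> simp [qubit, hv1, hne]
  have h1 : tensorPow (qubit a b) n x = ∏ i, (a ^ (1 - (x i).val) * b ^ ((x i).val)) := by
    unfold tensorPow
    exact Finset.prod_congr rfl fun i _ => hfac i
  rw [h1, Finset.prod_mul_distrib, Finset.prod_pow_eq_pow_sum, Finset.prod_pow_eq_pow_sum]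
  have hsum : (∑ i, (1 - (x i).val)) = n - wt x := by
    have hadd : (∑ i, (1 - (x i).val)) + (∑ i, (x i).val) = n := by
      rw [← Finset.sum_add_distrib]
      have : ∀ i : Fin n, (1 - (x i).val) + (x i).val = 1 := by
        intro i
        rcases zmod2_cases (x i) with h | h <;> rw [h] <;> rfl
      rw [Finset.sum_congr rfl fun i _ => this i]
      simp
    unfold wt
    omega
  rw [hsum]
  rfl

lemma valZ0 : (0 : ZMod 2).val = 0 := rfl
lemma valZ1 : (1 : ZMod 2).val = 1 := rfl

def st1 : F2 6 → ℂ := fun _ => 1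
def st2 : F2 6 → ℂ := fun x => (-1:ℂ)^((E1 x).val)
def st3 : F2 6 → ℂ := fun x => (-1:ℂ)^((E2 x).val)
def st4 : F2 6 → ℂ := fun x => Complex.I^((E1 x).val) * (-1:ℂ)^((E2 x).val)
def st5 : F2 6 → ℂ := fun x => if x = 0 then 1 else 0
def st6 : F2 6 → ℂ := fun x => if x = (fun _ => 1) then 1 else 0
def st7 : F2 6 → ℂ := fun x => if E1 x = 1 then (-1:ℂ)^((QA x).val) else 0
def st8 : F2 6 → ℂ := fun x => if E1 x = 1 then (-1:ℂ)^((QB x).val) else 0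

def gg (a b : ℂ) (w : ℕ) : ℂ := a^(6-w) * b^w
def m0 (a b : ℂ) : ℂ := gg a b 4
def m1 (a b : ℂ) : ℂ := (gg a b 1 + gg a b 5)/2
def m2 (a b : ℂ) : ℂ := gg a b 2
def m3 (a b : ℂ) : ℂ := gg a b 3
def cc1 (a b : ℂ) : ℂ := (m0 a b + m1 a b + m2 a b + m3 a b)/4
def cc2 (a b : ℂ) : ℂ := (m0 a b - m1 a b + m2 a b - m3 a b)/4
def cc4 (a b : ℂ) : ℂ := ((m1 a b - m3 a b) - (m0 a b - m2 a b)) * (-1 - Complex.I)/4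
def cc3 (a b : ℂ) : ℂ := (m0 a b - m2 a b)/2 - cc4 a b
def cc5 (a b : ℂ) : ℂ := gg a b 0 - gg a b 4
def cc6 (a b : ℂ) : ℂ := gg a b 6 - gg a b 2
def cc7 (a b : ℂ) : ℂ := (gg a b 1 - gg a b 5)/4

lemma hIne : Complex.I - 1 ≠ 0 := by
  intro h; apply_fun Complex.im at h; simp at h

lemma hIne4 : (-4 + Complex.I * 4 : ℂ) ≠ 0 := by
  intro h
  apply hIne
  have : (4:ℂ) * (Complex.I - 1) = -4 + Complex.I * 4 := by ring
  have h4 : (4:ℂ) * (Complex.I - 1) = 0 := by rw [this, h]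
  rcases mul_eq_zero.mp h4 with h'|h'
  · norm_num at h'
  · exact h'

lemma hbig : (256 - Complex.I * 512 + Complex.I ^ 2 * 256 : ℂ) ≠ 0 := by
  have h : (256 - Complex.I * 512 + Complex.I ^ 2 * 256 : ℂ) = (16*(Complex.I - 1))^2 := by ring
  rw [h]
  apply pow_ne_zero
  intro h16
  rcases mul_eq_zero.mp h16 with h'|h'
  · norm_num at h'
  · exact hIne h'

lemma hIne2 : (2 * (Complex.I - 1) : ℂ) ≠ 0 := by
  intro h
  rcases mul_eq_zero.mp h with h'|h'
  · norm_num at h'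
  · exact hIne h'

lemma key_pointwise (a b : ℂ) (x : F2 6) :
    tensorPow (qubit a b) 6 x =
      cc1 a b * st1 x + cc2 a b * st2 x + cc3 a b * st3 x + cc4 a b * st4 x
      + cc5 a b * st5 x + cc6 a b * st6 x + cc7 a b * st7 x + cc7 a b * st8 x := by
  rw [tensorPow_qubit_apply]
  have h6 := factwt6 x
  have h5cond : (x = 0) = (wt x = 0) := (propext (factwt0 x)).symm
  have h6cond : (x = (fun _ => (1:ZMod 2))) = (wt x = 6) := (propext (factwt66 x)).symm
  simp only [st1, st2, st3, st4, st5, st6, st7, st8, factE1 x, factE2 x, h5cond, h6cond]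
  rcases (by omega : wt x = 0 ∨ wt x = 1 ∨ wt x = 2 ∨ wt x = 3 ∨ wt x = 4 ∨ wt x = 5 ∨ wt x = 6)
    with hw|hw|hw|hw|hw|hw|hw
  · -- w = 0
    have hVA : (((0:ℕ)) : ZMod 2).val = 0 := by decide
    have hVB : ((((0:ℕ).choose 2) : ℕ) : ZMod 2).val = 0 := by decide
    have hC : ¬ (((0:ℕ) : ZMod 2) = 1) := by decide
    simp only [hw, hVA, hVB, if_neg hC]
    norm_num
    simp only [cc1, cc2, cc3, cc4, cc5, cc6, cc7, m0, m1, m2, m3, gg]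
    norm_num
    ring
  · -- w = 1
    have hVA : (((1:ℕ)) : ZMod 2).val = 1 := by decide
    have hVB : ((((1:ℕ).choose 2) : ℕ) : ZMod 2).val = 0 := by decide
    have hC : (((1:ℕ) : ZMod 2) = 1) := by decide
    obtain ⟨hqa, hqb⟩ := factQ1 x hw
    simp only [hw, hVA, hVB, if_pos hC, hqa, hqb, valZ0]
    norm_num
    simp only [cc1, cc2, cc3, cc4, cc5, cc6, cc7, m0, m1, m2, m3, gg]
    norm_num
    linear_combination ((1/8 : ℂ)*a^1*b^5 + (-1/4 : ℂ)*a^2*b^4 + (-1/4 : ℂ)*a^3*b^3 + (1/4 : ℂ)*a^4*b^2 + (1/8 : ℂ)*a^5*b^1) * Complex.I_sq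
  · -- w = 2
    have hVA : (((2:ℕ)) : ZMod 2).val = 0 := by decide
    have hVB : ((((2:ℕ).choose 2) : ℕ) : ZMod 2).val = 1 := by decide
    have hC : ¬ (((2:ℕ) : ZMod 2) = 1) := by decide
    simp only [hw, hVA, hVB, if_neg hC]
    norm_num
    simp only [cc1, cc2, cc3, cc4, cc5, cc6, cc7, m0, m1, m2, m3, gg]
    norm_num
    ring
  · -- w = 3
    have hVA : (((3:ℕ)) : ZMod 2).val = 1 := by decide
    have hVB : ((((3:ℕ).choose 2) : ℕ) : ZMod 2).val = 1 := by decide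
    have hC : (((3:ℕ) : ZMod 2) = 1) := by decide
    have hq3 := factQ3 x hw
    rcases zmod2_cases (QA x) with ha|ha <;> rcases zmod2_cases (QB x) with hb|hb
    · rw [ha, hb] at hq3; exact absurd hq3 (by decide)
    · simp only [hw, hVA, hVB, if_pos hC, ha, hb, valZ0, valZ1]
      norm_num
      simp only [cc1, cc2, cc3, cc4, cc5, cc6, cc7, m0, m1, m2, m3, gg]
      norm_num
      linear_combination ((-1/8 : ℂ)*a^1*b^5 + (1/4 : ℂ)*a^2*b^4 + (1/4 : ℂ)*a^3*b^3 + (-1/4 : ℂ)*a^4*b^2 + (-1/8 : ℂ)*a^5*b^1) * Complex.I_sq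
    · simp only [hw, hVA, hVB, if_pos hC, ha, hb, valZ0, valZ1]
      norm_num
      simp only [cc1, cc2, cc3, cc4, cc5, cc6, cc7, m0, m1, m2, m3, gg]
      norm_num
      linear_combination ((-1/8 : ℂ)*a^1*b^5 + (1/4 : ℂ)*a^2*b^4 + (1/4 : ℂ)*a^3*b^3 + (-1/4 : ℂ)*a^4*b^2 + (-1/8 : ℂ)*a^5*b^1) * Complex.I_sq
    · rw [ha, hb] at hq3; exact absurd hq3 (by decide)
  · -- w = 4
    have hVA : (((4:ℕ)) : ZMod 2).val = 0 := by decide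
    have hVB : ((((4:ℕ).choose 2) : ℕ) : ZMod 2).val = 0 := by decide
    have hC : ¬ (((4:ℕ) : ZMod 2) = 1) := by decide
    simp only [hw, hVA, hVB, if_neg hC]
    norm_num
    simp only [cc1, cc2, cc3, cc4, cc5, cc6, cc7, m0, m1, m2, m3, gg]
    norm_num
    ring
  · -- w = 5
    have hVA : (((5:ℕ)) : ZMod 2).val = 1 := by decide
    have hVB : ((((5:ℕ).choose 2) : ℕ) : ZMod 2).val = 0 := by decide
    have hC : (((5:ℕ) : ZMod 2) = 1) := by decide
    obtain ⟨hqa, hqb⟩ := factQ5 x hw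
    simp only [hw, hVA, hVB, if_pos hC, hqa, hqb, valZ1]
    norm_num
    simp only [cc1, cc2, cc3, cc4, cc5, cc6, cc7, m0, m1, m2, m3, gg]
    norm_num
    linear_combination ((1/8 : ℂ)*a^1*b^5 + (-1/4 : ℂ)*a^2*b^4 + (-1/4 : ℂ)*a^3*b^3 + (1/4 : ℂ)*a^4*b^2 + (1/8 : ℂ)*a^5*b^1) * Complex.I_sq
  · -- w = 6
    have hVA : (((6:ℕ)) : ZMod 2).val = 0 := by decide
    have hVB : ((((6:ℕ).choose 2) : ℕ) : ZMod 2).val = 1 := by decide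
    have hC : ¬ (((6:ℕ) : ZMod 2) = 1) := by decide
    simp only [hw, hVA, hVB, if_neg hC]
    norm_num
    simp only [cc1, cc2, cc3, cc4, cc5, cc6, cc7, m0, m1, m2, m3, gg]
    norm_num
    ring


lemma isStab_st1 : IsStabilizerState st1 := by
  refine ⟨Set.univ, fun _ => 0, fun _ => 0, ⟨⟨0, trivial⟩, fun x _ y _ z _ => trivial⟩,
    fun x y => by simp, ⟨rfl, fun x y z => by simp⟩, fun x => by simp [st1]⟩

lemma isStab_st2 : IsStabilizerState st2 := by
  refine ⟨Set.univ, fun _ => 0, E1, ⟨⟨0, trivial⟩, fun x _ y _ z _ => trivial⟩,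
    fun x y => by simp, isQuad_E1, fun x => by simp [st2]⟩

lemma isStab_st3 : IsStabilizerState st3 := by
  refine ⟨Set.univ, fun _ => 0, E2, ⟨⟨0, trivial⟩, fun x _ y _ z _ => trivial⟩,
    fun x y => by simp, isQuad_E2, fun x => by simp [st3]⟩

lemma isStab_st4 : IsStabilizerState st4 := by
  refine ⟨Set.univ, E1, E2, ⟨⟨0, trivial⟩, fun x _ y _ z _ => trivial⟩,
    isLin_E1, isQuad_E2, fun x => by simp [st4]⟩

lemma isStab_st5 : IsStabilizerState st5 := isStabilizerState_point 0

lemma isStab_st6 : IsStabilizerState st6 := isStabilizerState_point (fun _ => 1)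

lemma oddSet_affine : IsAffineSubspace {x : F2 6 | E1 x = 1} := by
  constructor
  · refine ⟨fun i => if i = 0 then 1 else 0, ?_⟩
    show E1 _ = 1
    decide
  · intro x hx y hy z hz
    have hx' : E1 x = 1 := hx
    have hy' : E1 y = 1 := hy
    have hz' : E1 z = 1 := hz
    show E1 (x + y + z) = 1
    rw [isLin_E1, isLin_E1, hx', hy', hz']
    decide

lemma isStab_st7 : IsStabilizerState st7 := by
  refine ⟨{x : F2 6 | E1 x = 1}, fun _ => 0, QA, oddSet_affine, fun x y => by simp,
    isQuad_QA, fun x => ?_⟩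
  simp only [st7, Set.mem_setOf_eq, valZ0, pow_zero, one_mul]

lemma isStab_st8 : IsStabilizerState st8 := by
  refine ⟨{x : F2 6 | E1 x = 1}, fun _ => 0, QB, oddSet_affine, fun x y => by simp,
    isQuad_QB, fun x => ?_⟩
  simp only [st8, Set.mem_setOf_eq, valZ0, pow_zero, one_mul]

lemma stabRank_qubit_six (a b : ℂ) : stabRank (tensorPow (qubit a b) 6) ≤ 8 := by
  refine stabRank_le
    ![cc1 a b, cc2 a b, cc3 a b, cc4 a b, cc5 a b, cc6 a b, cc7 a b, cc7 a b]
    ![st1, st2, st3, st4, st5, st6, st7, st8] ?_ ?_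
  · intro i
    fin_cases i
    · exact isStab_st1
    · exact isStab_st2
    · exact isStab_st3
    · exact isStab_st4
    · exact isStab_st5
    · exact isStab_st6
    · exact isStab_st7
    · exact isStab_st8
  · funext x
    rw [Finset.sum_apply, Fin.sum_univ_eight]
    simp only [Matrix.cons_val_zero, Matrix.cons_val_one, Matrix.head_cons,
      Matrix.cons_val_two, Matrix.tail_cons, Matrix.cons_val_three, Matrix.cons_val_four,
      Matrix.cons_val_fin_one, Pi.smul_apply, smul_eq_mul]
    exact key_pointwise a b x

lemma qubit_eta (ψ : ZMod 2 → ℂ) : qubit (ψ 0) (ψ 1) = ψ := by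
  funext u
  have hne : (1 : ZMod 2) ≠ 0 := by decide
  rcases zmod2_cases u with h | h <;> rw [h] <;> simp [qubit, hne]

lemma stabRank_tensorPow_six (ψ : ZMod 2 → ℂ) : stabRank (tensorPow ψ 6) ≤ 8 := by
  have := stabRank_qubit_six (ψ 0) (ψ 1)
  rwa [qubit_eta] at this

lemma bound_aux (ψ : ZMod 2 → ℂ) : ∀ k r : ℕ, r ≤ 5 →
    stabRank (tensorPow ψ (6 * k + r)) ≤ 8 ^ k * 2 ^ r := by
  intro k
  induction k with
  | zero =>
    intro r _
    have h : 6 * 0 + r = r := by ring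
    rw [h]
    simpa using stabRank_le_two_pow (tensorPow ψ r)
  | succ k ih =>
    intro r hr
    have h1 : 6 * (k+1) + r = (6 * k + r) + 6 := by ring
    rw [h1]
    calc stabRank (tensorPow ψ ((6*k+r) + 6))
        ≤ stabRank (tensorPow ψ (6*k+r)) * stabRank (tensorPow ψ 6) :=
          stabRank_tensorPow_add ψ _ 6
      _ ≤ (8 ^ k * 2 ^ r) * 8 :=
          Nat.mul_le_mul (ih r hr) (stabRank_tensorPow_six ψ)
      _ = 8 ^ (k+1) * 2 ^ r := by ring

lemma genStabRank_le (n : ℕ) : genStabRank n ≤ 8 ^ (n / 6) * 2 ^ (n % 6) := by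
  apply csSup_le'
  rintro r ⟨ψ, -, rfl⟩
  have h : 6 * (n / 6) + n % 6 = n := Nat.div_add_mod n 6
  have h5 : n % 6 ≤ 5 := by omega
  calc stabRank (tensorPow ψ n) = stabRank (tensorPow ψ (6 * (n/6) + n % 6)) := by rw [h]
    _ ≤ 8 ^ (n/6) * 2 ^ (n % 6) := bound_aux ψ (n/6) (n%6) h5

end Aux


/-- There is a constant `C > 0` with `χ_n ≤ C·2^{n/2}` for every positive integer `n`. -/
theorem genStabRank_upper_bound :
    ∃ C : ℝ, 0 < C ∧ ∀ n : ℕ, 1 ≤ n →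
      (genStabRank n : ℝ) ≤ C * (2 : ℝ) ^ ((n : ℝ) / 2) := by
  refine ⟨8, by norm_num, fun n _ => ?_⟩
  have hb := genStabRank_le n
  have hcast : (genStabRank n : ℝ) ≤ ((8 ^ (n / 6) * 2 ^ (n % 6) : ℕ) : ℝ) := by
    exact_mod_cast hb
  refine hcast.trans ?_
  set k := n / 6
  set r := n % 6
  have hkr : 6 * k + r = n := Nat.div_add_mod n 6
  have hr5 : r ≤ 5 := by omega
  have hpow : ((8 ^ k * 2 ^ r : ℕ) : ℝ) = (2 : ℝ) ^ (3 * k + r : ℕ) := by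
    push_cast
    rw [pow_add, pow_mul]
    norm_num
  rw [hpow]
  have hrpow : (2 : ℝ) ^ (3 * k + r : ℕ) = (2 : ℝ) ^ ((3 * k + r : ℕ) : ℝ) :=
    (Real.rpow_natCast 2 (3 * k + r)).symm
  rw [hrpow]
  have hexp : ((3 * k + r : ℕ) : ℝ) ≤ (n : ℝ) / 2 + 3 := by
    have h2 : 2 * (3 * k + r) ≤ n + 6 := by omega
    have h3 : ((3 * k + r : ℕ) : ℝ) = 3*(k:ℝ) + (r:ℝ) := by push_cast; ring
    rw [h3]
    have h4 : 2 * (3 * (k:ℝ) + (r:ℝ)) ≤ (n:ℝ) + 6 := by exact_mod_cast h2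
    linarith
  have hmono : (2 : ℝ) ^ ((3 * k + r : ℕ) : ℝ) ≤ (2 : ℝ) ^ ((n : ℝ) / 2 + 3) :=
    Real.rpow_le_rpow_of_exponent_le (by norm_num) hexp
  refine hmono.trans ?_
  rw [Real.rpow_add (by norm_num : (0:ℝ) < 2)]
  rw [mul_comm]
  have h8 : (2 : ℝ) ^ (3 : ℝ) = 8 := by
    rw [show (3:ℝ) = ((3:ℕ):ℝ) by norm_num, Real.rpow_natCast]
    norm_num
  rw [h8]

end StabPaper
end
end

section
/- For every positive integer n, the n-th generic stabilizer rank satisfies χ_n ≥ n + 1. -/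
open scoped BigOperators Classical

noncomputable section

namespace StabPaper

/-! ### Auxiliary material for the lower bound -/

/-- The subfield `ℚ(i) ⊆ ℂ` of complex numbers with rational real and imaginary parts. -/
def Kf : Subfield ℂ where
  carrier := {z | ∃ a b : ℚ, z.re = a ∧ z.im = b}
  one_mem' := ⟨1, 0, by simp⟩
  zero_mem' := ⟨0, 0, by simp⟩
  mul_mem' := by
    rintro x y ⟨a, b, ha, hb⟩ ⟨c, d, hc, hd⟩
    exact ⟨a * c - b * d, a * d + b * c,
      by simp [Complex.mul_re, ha, hb, hc, hd],
      by simp [Complex.mul_im, ha, hb, hc, hd]⟩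
  add_mem' := by
    rintro x y ⟨a, b, ha, hb⟩ ⟨c, d, hc, hd⟩
    exact ⟨a + c, b + d, by simp [ha, hc], by simp [hb, hd]⟩
  neg_mem' := by
    rintro x ⟨a, b, ha, hb⟩
    exact ⟨-a, -b, by simp [ha], by simp [hb]⟩
  inv_mem' := by
    rintro x ⟨a, b, ha, hb⟩
    refine ⟨a / (a * a + b * b), -b / (a * a + b * b), ?_, ?_⟩
    · rw [Complex.inv_re, Complex.normSq_apply, ha, hb]; push_cast; ring
    · rw [Complex.inv_im, Complex.normSq_apply, ha, hb]; push_cast; ring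

lemma I_mem_Kf : Complex.I ∈ Kf := ⟨0, 1, by simp, by simp⟩

lemma stab_val_mem_Kf {n : ℕ} {σ : F2 n → ℂ} (h : IsStabilizerState σ) (x : F2 n) :
    σ x ∈ Kf := by
  obtain ⟨A, l, q, -, -, -, hσ⟩ := h
  rw [hσ x]
  split
  · exact Kf.mul_mem (Kf.pow_mem I_mem_Kf _) (Kf.pow_mem (Kf.neg_mem Kf.one_mem) _)
  · exact Kf.zero_mem

/-- The indicator of a single point is a stabilizer state. -/
lemma isStabilizerState_delta {n : ℕ} (x : F2 n) :
    IsStabilizerState (fun y => if y = x then (1 : ℂ) else 0) := by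
  refine ⟨{x}, fun _ => 0, fun _ => 0, ⟨⟨x, rfl⟩, ?_⟩, fun _ _ => by simp, ⟨rfl, by simp⟩, ?_⟩
  · rintro a ha b hb c hc
    simp only [Set.mem_singleton_iff] at ha hb hc ⊢
    rw [ha, hb, hc]
    have hxx : x + x = 0 := funext fun i => CharTwo.add_self_eq_zero _
    rw [hxx, zero_add]
  · intro y
    simp [Set.mem_singleton_iff, ZMod.val_zero]

/-- Every vector is a combination of `2^n` stabilizer states. -/
lemma exists_decomp {n : ℕ} (φ : F2 n → ℂ) :
    ∃ (c : Fin (2 ^ n) → ℂ) (σ : Fin (2 ^ n) → (F2 n → ℂ)),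
      (∀ i, IsStabilizerState (σ i)) ∧ φ = ∑ i, c i • σ i := by
  have hcard : Fintype.card (F2 n) = 2 ^ n := by
    simp [Fintype.card_fun]
  let e : Fin (2 ^ n) ≃ F2 n := (Fintype.equivFinOfCardEq hcard).symm
  refine ⟨fun i => φ (e i), fun i y => if y = e i then 1 else 0,
    fun i => isStabilizerState_delta (e i), ?_⟩
  funext y
  have : (∑ i, (fun i => φ (e i)) i • fun z => if z = e i then (1 : ℂ) else 0) y
      = ∑ i, φ (e i) * (if y = e i then 1 else 0) := by
    simp [Finset.sum_apply]
  rw [this]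
  rw [show (∑ i : Fin (2 ^ n), φ (e i) * (if y = e i then 1 else 0))
      = ∑ x : F2 n, φ x * (if y = x then 1 else 0) from
    Equiv.sum_comp e (fun x => φ x * (if y = x then 1 else 0))]
  simp

lemma stabRank_le_pow {n : ℕ} (φ : F2 n → ℂ) : stabRank φ ≤ 2 ^ n := by
  obtain ⟨c, σ, h1, h2⟩ := exists_decomp φ
  exact Nat.sInf_le ⟨c, σ, h1, h2⟩

lemma stabSet_nonempty {n : ℕ} (φ : F2 n → ℂ) :
    {r : ℕ | ∃ (c : Fin r → ℂ) (σ : Fin r → (F2 n → ℂ)),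
      (∀ i, IsStabilizerState (σ i)) ∧ φ = ∑ i, c i • σ i}.Nonempty := by
  obtain ⟨c, σ, h1, h2⟩ := exists_decomp φ
  exact ⟨2 ^ n, c, σ, h1, h2⟩

lemma poly_coeffs_zero {m : ℕ} {t : ℝ} (htr : Transcendental ℚ t) (a : Fin m → ℚ)
    (h : ∑ k, (a k : ℝ) * t ^ (k : ℕ) = 0) : ∀ k, a k = 0 := by
  intro k
  by_contra hk
  apply htr
  refine ⟨∑ j : Fin m, Polynomial.monomial j.val (a j), ?_, ?_⟩
  · intro h0
    have hc : (∑ j : Fin m, Polynomial.monomial j.val (a j)).coeff (k : ℕ) = a k := by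
      rw [Polynomial.finset_sum_coeff]
      rw [Finset.sum_eq_single k]
      · simp
      · intro j _ hjk
        rw [Polynomial.coeff_monomial, if_neg (by simpa [Fin.val_injective.eq_iff] using hjk)]
      · simp
    rw [h0] at hc
    simp at hc
    exact hk hc.symm
  · rw [map_sum]
    simpa [Polynomial.aeval_monomial, mul_comm] using h

lemma prod_ite_range (t : ℂ) : ∀ n k : ℕ, k ≤ n →
    (∏ i ∈ Finset.range n, (if i < k then t else 1)) = t ^ k := by
  intro n
  induction n with
  | zero => intro k hk; interval_cases k; simp
  | succ n ih =>
    intro k hk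
    rw [Finset.prod_range_succ]
    rcases Nat.lt_or_ge k (n + 1) with h | h
    · have hk' : k ≤ n := Nat.lt_succ_iff.mp h
      rw [ih k hk', if_neg (by omega), mul_one]
    · have hk' : k = n + 1 := le_antisymm hk h
      subst hk'
      rw [if_pos (by omega)]
      have : (∏ i ∈ Finset.range n, (if i < n + 1 then t else 1)) = t ^ n := by
        rw [Finset.prod_congr rfl (fun i hi => if_pos (by
          have := Finset.mem_range.mp hi; omega))]
        simp
      rw [this, pow_succ]

set_option synthInstance.maxHeartbeats 1000000 in
set_option maxHeartbeats 1000000 in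
/-- The key lower bound: any stabilizer decomposition of the `n`-fold tensor power of
`(1, liouvilleNumber 3)` has at least `n + 1` terms. -/
lemma key_lower_bound (n : ℕ) (r : ℕ) (c : Fin r → ℂ) (σ : Fin r → (F2 n → ℂ))
    (hσ : ∀ i, IsStabilizerState (σ i))
    (hsum : tensorPow (qubit 1 ((liouvilleNumber 3 : ℝ) : ℂ)) n = ∑ i, c i • σ i) :
    n + 1 ≤ r := by
  set t : ℝ := liouvilleNumber 3 with ht
  by_contra hcon
  push_neg at hcon
  have hr : r ≤ n := Nat.lt_succ_iff.mp hcon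
  -- the chain of points
  set X : Fin (n + 1) → F2 n := fun k i => if (i : ℕ) < (k : ℕ) then 1 else 0 with hX
  have hval : ∀ k : Fin (n + 1),
      tensorPow (qubit 1 ((t : ℝ) : ℂ)) n (X k) = ((t : ℂ)) ^ (k : ℕ) := by
    intro k
    have h1 : tensorPow (qubit 1 ((t : ℝ) : ℂ)) n (X k)
        = ∏ i : Fin n, (if (i : ℕ) < (k : ℕ) then (t : ℂ) else 1) := by
      unfold tensorPow qubit
      refine Finset.prod_congr rfl (fun i _ => ?_)
      by_cases hik : (i : ℕ) < (k : ℕ)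
      · simp [hX, hik]
      · simp [hX, hik]
    rw [h1, Fin.prod_univ_eq_prod_range (fun i => if i < (k : ℕ) then (t : ℂ) else 1)]
    exact prod_ite_range (t : ℂ) n k (Nat.lt_succ_iff.mp k.isLt)
  -- vectors over `ℚ(i)`
  set W : Fin (n + 1) → (Fin r → Kf) :=
    fun k i => ⟨σ i (X k), stab_val_mem_Kf (hσ i) (X k)⟩ with hW
  have hnotLI : ¬ LinearIndependent Kf W := by
    intro hLI
    have hle := hLI.fintype_card_le_finrank
    rw [Module.finrank_fintype_fun_eq_card] at hle
    simp only [Fintype.card_fin] at hle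
    omega
  obtain ⟨g, hg, j, hj⟩ := Fintype.not_linearIndependent_iff.mp hnotLI
  have hcoord : ∀ i : Fin r, ∑ k, ((g k : ℂ)) * σ i (X k) = 0 := by
    intro i
    have h1 : (∑ k, g k • W k) i = 0 := by rw [hg]; rfl
    have h2 : (∑ k, g k • W k) i = ∑ k, g k * W k i := by
      rw [Finset.sum_apply]; rfl
    have h3 := congrArg (Kf.subtype) (h2 ▸ h1)
    rw [map_sum] at h3
    simpa using h3
  have hzero : ∑ k : Fin (n + 1), ((g k : ℂ)) * ((t : ℂ)) ^ (k : ℕ) = 0 := by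
    have e1 : ∀ k : Fin (n + 1), ((g k : ℂ)) * ((t : ℂ)) ^ (k : ℕ)
        = (g k : ℂ) * ∑ i, c i * σ i (X k) := by
      intro k
      rw [← hval k, hsum]
      simp [Finset.sum_apply]
    rw [Finset.sum_congr rfl (fun k _ => e1 k)]
    have e2 : ∀ k : Fin (n + 1), (g k : ℂ) * ∑ i, c i * σ i (X k)
        = ∑ i, c i * ((g k : ℂ) * σ i (X k)) := by
      intro k; rw [Finset.mul_sum]; exact Finset.sum_congr rfl (fun i _ => by ring)
    rw [Finset.sum_congr rfl (fun k _ => e2 k), Finset.sum_comm]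
    refine Finset.sum_eq_zero (fun i _ => ?_)
    rw [← Finset.mul_sum, hcoord i, mul_zero]
  -- split into real and imaginary parts
  choose a b ha hb using fun k : Fin (n + 1) => (g k).2
  have htr0 : Transcendental ℤ t := by
    have h3 := transcendental_liouvilleNumber (m := 3) (by norm_num)
    rw [ht]
    simpa using h3
  have htr : Transcendental ℚ t :=
    fun h => htr0 ((IsFractionRing.isAlgebraic_iff ℤ ℚ ℝ).mpr h)
  have hre : ∑ k : Fin (n + 1), ((a k : ℝ)) * t ^ (k : ℕ) = 0 := by
    have h1 := congrArg Complex.re hzero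
    rw [Complex.re_sum] at h1
    simp only [Complex.zero_re] at h1
    rw [← h1]
    refine Finset.sum_congr rfl (fun k _ => ?_)
    rw [← Complex.ofReal_pow, Complex.mul_re, Complex.ofReal_re, Complex.ofReal_im,
      ha k]
    ring
  have him : ∑ k : Fin (n + 1), ((b k : ℝ)) * t ^ (k : ℕ) = 0 := by
    have h1 := congrArg Complex.im hzero
    rw [Complex.im_sum] at h1
    simp only [Complex.zero_im] at h1
    rw [← h1]
    refine Finset.sum_congr rfl (fun k _ => ?_)
    rw [← Complex.ofReal_pow, Complex.mul_im, Complex.ofReal_re, Complex.ofReal_im,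
      hb k]
    ring
  have haz := poly_coeffs_zero htr a hre j
  have hbz := poly_coeffs_zero htr b him j
  apply hj
  have : (g j : ℂ) = 0 := by
    apply Complex.ext
    · rw [ha j, haz]; simp
    · rw [hb j, hbz]; simp
  exact Subtype.ext this

/-- For every positive integer `n`, the generic stabilizer rank satisfies `χ_n ≥ n + 1`. -/
theorem genStabRank_lower_bound (n : ℕ) (hn : 1 ≤ n) :
    n + 1 ≤ genStabRank n := by
  set ψ : ZMod 2 → ℂ := qubit 1 ((liouvilleNumber 3 : ℝ) : ℂ) with hψdef
  have hψ : ψ ≠ 0 := by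
    intro h
    have h0 := congrFun h 0
    simp [hψdef, qubit] at h0
  have hlow : n + 1 ≤ stabRank (tensorPow ψ n) := by
    refine le_csInf (stabSet_nonempty _) ?_
    rintro r ⟨c, σ, h1, h2⟩
    exact key_lower_bound n r c σ h1 h2
  have hmem : stabRank (tensorPow ψ n) ∈
      {r : ℕ | ∃ ψ : ZMod 2 → ℂ, ψ ≠ 0 ∧ stabRank (tensorPow ψ n) = r} :=
    ⟨ψ, hψ, rfl⟩
  have hbdd : BddAbove {r : ℕ | ∃ ψ : ZMod 2 → ℂ, ψ ≠ 0 ∧ stabRank (tensorPow ψ n) = r} := by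
    refine ⟨2 ^ n, ?_⟩
    rintro r ⟨φ, -, hr⟩
    exact hr ▸ stabRank_le_pow _
  exact hlow.trans (le_csSup hbdd hmem)

end StabPaper
end
end
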